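/- Let θ be an n×n matrix with strictly positive diagonal entries and zeros elsewhere. Then for every M ≥ 1, perm(θ) = (M^n/(M!)^{n/M}) · perm_{scS,M}(θ), where perm_{scS,M}(θ) = (perm(θ ⊗ U_{M,M}))^{1/M} and U_{M,M} is the M×M all-(1/M) matrix. -/

import Mathlib

open scoped BigOperators Kronecker

/-- The permanent of a square real matrix over an arbitrary finite index type. -/
noncomputable def permG {α : Type*} [Fintype α] [DecidableEq α] (A : Matrix α α ℝ) : ℝ :=
  ∑ σ : Equiv.Perm α, ∏ i, A i (σ i)

/-- The `M × M` matrix all of whose entries are `1/M`. -/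
noncomputable def Umat (M : ℕ) : Matrix (Fin M) (Fin M) ℝ := fun _ _ => 1 / (M : ℝ)

/-- The degree-`M` scaled Sinkhorn permanent `(perm(θ ⊗ U_{M,M}))^{1/M}`. -/
noncomputable def permScS {n : ℕ} (M : ℕ) (θ : Matrix (Fin n) (Fin n) ℝ) : ℝ :=
  (permG (θ ⊗ₖ Umat M)) ^ ((1 : ℝ) / M)

lemma permG_of_offdiag_zero {α : Type*} [Fintype α] [DecidableEq α]
    (A : Matrix α α ℝ) (h : ∀ i j, i ≠ j → A i j = 0) :
    permG A = ∏ i, A i i := by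
  unfold permG
  rw [Finset.sum_eq_single (1 : Equiv.Perm α)]
  · simp
  · intro σ _ hσ
    obtain ⟨i, hi⟩ : ∃ i, σ i ≠ i := by
      by_contra hc; push_neg at hc
      exact hσ (Equiv.ext hc)
    exact Finset.prod_eq_zero (Finset.mem_univ i) (h i (σ i) (Ne.symm hi))
  · intro h1; exact absurd (Finset.mem_univ _) h1

lemma permG_kron_diag {n M : ℕ} (θ : Matrix (Fin n) (Fin n) ℝ)
    (hoff : ∀ i j, i ≠ j → θ i j = 0) :
    permG (θ ⊗ₖ Umat M) = (M.factorial : ℝ) ^ n * ∏ i, (θ i i / M) ^ M := by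
  classical
  unfold permG
  have hzero : ∀ σ : Equiv.Perm (Fin n × Fin M),
      σ ∉ Finset.univ.filter (fun σ : Equiv.Perm (Fin n × Fin M) =>
        ∀ p : Fin n × Fin M, (σ p).1 = p.1) →
      ∏ p : Fin n × Fin M, (θ ⊗ₖ Umat M) p (σ p) = 0 := by
    intro σ hσ
    simp only [Finset.mem_filter, Finset.mem_univ, true_and, not_forall] at hσ
    obtain ⟨p, hp⟩ := hσ
    refine Finset.prod_eq_zero (Finset.mem_univ p) ?_
    simp only [Matrix.kroneckerMap_apply]
    rw [hoff p.1 (σ p).1 (Ne.symm hp), zero_mul]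
  rw [← Finset.sum_filter_add_sum_filter_not Finset.univ
        (fun σ : Equiv.Perm (Fin n × Fin M) => ∀ p : Fin n × Fin M, (σ p).1 = p.1)]
  have hz2 : ∑ σ ∈ Finset.univ.filter (fun σ : Equiv.Perm (Fin n × Fin M) =>
        ¬ ∀ p : Fin n × Fin M, (σ p).1 = p.1),
      ∏ p : Fin n × Fin M, (θ ⊗ₖ Umat M) p (σ p) = 0 := by
    refine Finset.sum_eq_zero fun σ hσ => ?_
    refine hzero σ ?_
    simp only [Finset.mem_filter, Finset.mem_univ, true_and] at hσ ⊢
    exact hσ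
  rw [hz2, add_zero]
  -- The filtered set is the image of prodCongrRight.
  have hbij : Finset.univ.filter (fun σ : Equiv.Perm (Fin n × Fin M) =>
        ∀ p : Fin n × Fin M, (σ p).1 = p.1)
      = Finset.image (fun τ : Fin n → Equiv.Perm (Fin M) => Equiv.prodCongrRight τ)
        Finset.univ := by
    ext σ
    simp only [Finset.mem_filter, Finset.mem_univ, true_and, Finset.mem_image]
    constructor
    · intro hσ
      have hσinv : ∀ p : Fin n × Fin M, (σ⁻¹ p).1 = p.1 := by
        intro p
        conv_rhs => rw [← show σ (σ⁻¹ p) = p from σ.apply_symm_apply p]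
        rw [hσ]
      refine ⟨fun i => ⟨fun a => (σ (i, a)).2, fun a => (σ⁻¹ (i, a)).2, ?_, ?_⟩, ?_⟩
      · intro a
        have h2 : ((i : Fin n), (σ (i, a)).2) = σ (i, a) :=
          Prod.ext (hσ (i, a)).symm rfl
        simp only [h2, show ∀ x, σ⁻¹ (σ x) = x from σ.symm_apply_apply]
      · intro a
        have h2 : ((i : Fin n), (σ⁻¹ (i, a)).2) = σ⁻¹ (i, a) :=
          Prod.ext (hσinv (i, a)).symm rfl
        simp only [h2, show ∀ x, σ (σ⁻¹ x) = x from σ.apply_symm_apply]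
      · refine Equiv.ext fun p => Prod.ext (hσ p).symm rfl
    · rintro ⟨τ, rfl⟩
      intro p
      rfl
  rw [hbij, Finset.sum_image (by
    intro τ _ τ' _ h
    funext i
    refine Equiv.ext fun a => ?_
    have := congrArg (fun e : Equiv.Perm (Fin n × Fin M) => (e (i, a)).2) h
    simpa using this)]
  have hterm : ∀ τ : Fin n → Equiv.Perm (Fin M),
      ∏ p : Fin n × Fin M, (θ ⊗ₖ Umat M) p (Equiv.prodCongrRight τ p)
        = ∏ i, (θ i i / M) ^ M := by
    intro τ
    rw [Fintype.prod_prod_type]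
    refine Finset.prod_congr rfl fun i _ => ?_
    have : ∀ a : Fin M, (θ ⊗ₖ Umat M) (i, a) (Equiv.prodCongrRight τ (i, a))
        = θ i i / M := by
      intro a
      simp [Matrix.kroneckerMap_apply, Umat, Equiv.prodCongrRight, div_eq_mul_inv,
        one_div]
    rw [Finset.prod_congr rfl fun a _ => this a, Finset.prod_const, Finset.card_univ,
      Fintype.card_fin]
  rw [Finset.sum_congr rfl fun τ _ => hterm τ, Finset.sum_const, Finset.card_univ]
  simp [Fintype.card_fun, Fintype.card_perm, mul_comm]

theorem diagonal_achieves_scaled_sinkhorn_upper_bound {n M : ℕ} (hM : 1 ≤ M)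
    (θ : Matrix (Fin n) (Fin n) ℝ) (hdiag : ∀ i, 0 < θ i i)
    (hoff : ∀ i j, i ≠ j → θ i j = 0) :
    permG θ = ((M : ℝ) ^ n / (M.factorial : ℝ) ^ ((n : ℝ) / M)) * permScS M θ := by
  have hM0 : (M : ℝ) ≠ 0 := by positivity
  have hMR : (0 : ℝ) < M := by positivity
  have hfac : (0 : ℝ) < (M.factorial : ℝ) := by positivity
  set P : ℝ := ∏ i, θ i i with hP
  have hPpos : 0 < P := Finset.prod_pos fun i _ => hdiag i
  have h1 : permG θ = P := permG_of_offdiag_zero θ hoff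
  have hprod : ∏ i, (θ i i / M) ^ M = (P / (M : ℝ) ^ n) ^ M := by
    rw [Finset.prod_pow, Finset.prod_div_distrib, Finset.prod_const, Finset.card_univ,
      Fintype.card_fin]
  have hscs : permScS M θ = (M.factorial : ℝ) ^ ((n : ℝ) / M) * (P / (M : ℝ) ^ n) := by
    unfold permScS
    rw [permG_kron_diag θ hoff, hprod]
    have hb : (0 : ℝ) ≤ P / (M : ℝ) ^ n := by positivity
    rw [Real.mul_rpow (by positivity) (by positivity)]
    congr 1
    · rw [← Real.rpow_natCast (M.factorial : ℝ) n, ← Real.rpow_mul hfac.le]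
      congr 1
      field_simp
    · rw [← Real.rpow_natCast (P / (M : ℝ) ^ n) M, ← Real.rpow_mul hb]
      rw [mul_one_div, div_self hM0, Real.rpow_one]
  rw [h1, hscs]
  have hfacpow : (0 : ℝ) < (M.factorial : ℝ) ^ ((n : ℝ) / M) := Real.rpow_pos_of_pos hfac _
  field_simp
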